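/- Let F be a field of characteristic not 2, r ≥ 1, and δ ∈ {1,−1}, where if δ = −1 we require r to be odd (so that r−1 is even and Z_{r−1,−1} is defined). Then the quadruple (F_r, G_rᵀ, I_r, I_{r−1}) of dimension (r, r, r−1, r−1) is isomorphic to the self-dual quadruple (F_r, F_rᵀ, Z_r, Z_{r−1,δ}); in particular, for δ = 1 an isomorphism is given by (Φ₁, Φ₂, Ψ₁, Ψ₂) = (I_r, Z_r, I_{r−1}, Z_{r−1}), using the identity Z_r G_rᵀ Z_{r−1} = F_rᵀ. -/

import Mathlib

open Matrix

/-- Cast a matrix along equalities of its dimensions. -/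
def castM {F : Type*} {m n m' n' : ℕ} (hm : m = m') (hn : n = n')
    (M : Matrix (Fin m') (Fin n') F) : Matrix (Fin m) (Fin n) F :=
  M.submatrix (Fin.cast hm) (Fin.cast hn)

/-- The adjoint `M* = (M̃)ᵀ` of a matrix with respect to the involution `inv`. -/
def adjM {F : Type*} (inv : F → F) {p q : ℕ} (M : Matrix (Fin p) (Fin q) F) :
    Matrix (Fin q) (Fin p) F :=
  Matrix.of fun i j => inv (M j i)

/-- Direct sum of two rectangular matrices (blocks placed diagonally, zeros elsewhere). -/
def dsumM {F : Type*} [Zero F] {m₁ n₁ m₂ n₂ : ℕ} (M₁ : Matrix (Fin m₁) (Fin n₁) F)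
    (M₂ : Matrix (Fin m₂) (Fin n₂) F) :
    Matrix (Fin (m₁ + m₂)) (Fin (n₁ + n₂)) F :=
  Matrix.reindex finSumFinEquiv finSumFinEquiv (Matrix.fromBlocks M₁ 0 0 M₂)

/-- `Z_r`: the `r×r` matrix with `(i,j)` entry `1` iff `i+j = r+1` (1-indexed). -/
def Zm (F : Type*) [Zero F] [One F] (r : ℕ) : Matrix (Fin r) (Fin r) F :=
  Matrix.of fun i j => if (i : ℕ) + (j : ℕ) = r - 1 then 1 else 0

/-- `Z_{r,ε}`: equals `Z_r` for `ε = 1`, and `[[0, -Z_{r/2}],[Z_{r/2},0]]` for `ε = -1`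
(and even `r`). -/
def ZmS {F : Type*} [Zero F] [One F] (r : ℕ) (ε : F) : Matrix (Fin r) (Fin r) F :=
  Matrix.of fun i j =>
    if (i : ℕ) + (j : ℕ) = r - 1 then (if (i : ℕ) < r / 2 then ε else 1) else 0

/-- `F_r`: the `(r-1)×r` matrix with `(i,i)` entries `1`, all other entries `0`. -/
def Fm (F : Type*) [Zero F] [One F] (r : ℕ) : Matrix (Fin (r - 1)) (Fin r) F :=
  Matrix.of fun i j => if (i : ℕ) = (j : ℕ) then 1 else 0

/-- `G_r`: the `(r-1)×r` matrix with `(i,i+1)` entries `1`, all other entries `0`. -/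
def Gm (F : Type*) [Zero F] [One F] (r : ℕ) : Matrix (Fin (r - 1)) (Fin r) F :=
  Matrix.of fun i j => if (i : ℕ) + 1 = (j : ℕ) then 1 else 0

/-- `J_r(μ)`: the upper triangular `r×r` Jordan block with eigenvalue `μ`. -/
def Jm {F : Type*} [Zero F] [One F] (r : ℕ) (μ : F) : Matrix (Fin r) (Fin r) F :=
  Matrix.of fun i j =>
    if (i : ℕ) = (j : ℕ) then μ else if (i : ℕ) + 1 = (j : ℕ) then 1 else 0

/-- `H_r(λ)`: the `r×r` matrix with `λ` on the antidiagonal `i+j = r+1` and `1`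
on the adjacent antidiagonal `i+j = r+2` (1-indexed). -/
def Hm {F : Type*} [Zero F] [One F] (r : ℕ) (lam : F) : Matrix (Fin r) (Fin r) F :=
  Matrix.of fun i j =>
    if (i : ℕ) + (j : ℕ) = r - 1 then lam
    else if (i : ℕ) + (j : ℕ) = r then 1 else 0

/-- `M^{⊘η} = [[0, η M*],[M, 0]]`, a square matrix of size `q + p` for `M` of size `p × q`. -/
def osl {F : Type*} [Ring F] (inv : F → F) (η : F) {p q : ℕ}
    (M : Matrix (Fin p) (Fin q) F) : Matrix (Fin (q + p)) (Fin (q + p)) F :=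
  Matrix.reindex finSumFinEquiv finSumFinEquiv
    (Matrix.fromBlocks 0 (η • adjM inv M) M 0)

/-- A matrix quadruple of dimension `(m₁, m₂, n₁, n₂)`:
`A₁ : n₁×m₁`, `A₂ : m₂×n₂`, `B : m₂×m₁`, `C : n₂×n₁`. -/
structure MQuad (F : Type*) [Ring F] where
  m₁ : ℕ
  m₂ : ℕ
  n₁ : ℕ
  n₂ : ℕ
  A₁ : Matrix (Fin n₁) (Fin m₁) F
  A₂ : Matrix (Fin m₂) (Fin n₂) F
  B : Matrix (Fin m₂) (Fin m₁) F
  C : Matrix (Fin n₂) (Fin n₁) F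

/-- Blockwise direct sum of quadruples. -/
def MQuad.dsum {F : Type*} [Ring F] (Q Q' : MQuad F) : MQuad F where
  m₁ := Q.m₁ + Q'.m₁
  m₂ := Q.m₂ + Q'.m₂
  n₁ := Q.n₁ + Q'.n₁
  n₂ := Q.n₂ + Q'.n₂
  A₁ := dsumM Q.A₁ Q'.A₁
  A₂ := dsumM Q.A₂ Q'.A₂
  B := dsumM Q.B Q'.B
  C := dsumM Q.C Q'.C

/-- Direct sum of a list of quadruples. -/
def qdsumList {F : Type*} [Ring F] (L : List (MQuad F)) : MQuad F :=
  L.foldr MQuad.dsum ⟨0, 0, 0, 0, 0, 0, 0, 0⟩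

/-- Isomorphism of quadruples: `A₁' = Ψ₁A₁Φ₁⁻¹`, `A₂' = Φ₂A₂Ψ₂⁻¹`, `B' = Φ₂BΦ₁⁻¹`,
`C' = Ψ₂CΨ₁⁻¹` with invertible `Φ₁, Φ₂, Ψ₁, Ψ₂`. -/
def MQuad.Iso {F : Type*} [Ring F] (Q Q' : MQuad F) : Prop :=
  ∃ (h₁ : Q.m₁ = Q'.m₁) (h₂ : Q.m₂ = Q'.m₂) (h₃ : Q.n₁ = Q'.n₁) (h₄ : Q.n₂ = Q'.n₂)
    (Φ₁ : Matrix (Fin Q.m₁) (Fin Q.m₁) F) (Φ₂ : Matrix (Fin Q.m₂) (Fin Q.m₂) F)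
    (Ψ₁ : Matrix (Fin Q.n₁) (Fin Q.n₁) F) (Ψ₂ : Matrix (Fin Q.n₂) (Fin Q.n₂) F),
    IsUnit Φ₁ ∧ IsUnit Φ₂ ∧ IsUnit Ψ₁ ∧ IsUnit Ψ₂ ∧
    castM h₃ h₁ Q'.A₁ * Φ₁ = Ψ₁ * Q.A₁ ∧
    castM h₂ h₄ Q'.A₂ * Ψ₂ = Φ₂ * Q.A₂ ∧
    castM h₂ h₁ Q'.B * Φ₁ = Φ₂ * Q.B ∧
    castM h₄ h₃ Q'.C * Ψ₁ = Ψ₂ * Q.C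

/-- The dual quadruple `(A₁,A₂,B,C)° = (A₂ᵀ, A₁ᵀ, Bᵀ, Cᵀ)`. -/
def MQuad.dual {F : Type*} [Ring F] (Q : MQuad F) : MQuad F :=
  ⟨Q.m₂, Q.m₁, Q.n₂, Q.n₁, Q.A₂ᵀ, Q.A₁ᵀ, Q.Bᵀ, Q.Cᵀ⟩

/-- Canonical quadruple (c): `(I_r, F_rᵀ, I_r, G_r)` of dimension `(r, r, r, r-1)`. -/
def quadC (F : Type*) [Ring F] (r : ℕ) : MQuad F :=
  ⟨r, r, r, r - 1, 1, (Fm F r)ᵀ, 1, Gm F r⟩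

/-- Canonical quadruple (d): `(I_r, F_r, G_r, I_r)` of dimension `(r, r-1, r, r)`. -/
def quadD (F : Type*) [Ring F] (r : ℕ) : MQuad F :=
  ⟨r, r - 1, r, r, 1, Fm F r, Gm F r, 1⟩

/-- Canonical quadruple (e): `(I_{r-1}, F_rᵀ, G_rᵀ, I_{r-1})` of dimension
`(r-1, r, r-1, r-1)`. -/
def quadE (F : Type*) [Ring F] (r : ℕ) : MQuad F :=
  ⟨r - 1, r, r - 1, r - 1, 1, (Fm F r)ᵀ, (Gm F r)ᵀ, 1⟩

/-- Canonical quadruple (f): `(I_{r-1}, F_r, I_{r-1}, G_rᵀ)` of dimension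
`(r-1, r-1, r-1, r)`. -/
def quadF (F : Type*) [Ring F] (r : ℕ) : MQuad F :=
  ⟨r - 1, r - 1, r - 1, r, 1, Fm F r, 1, (Gm F r)ᵀ⟩


section Stmt17Aux
open Matrix

lemma st17_sum_if_eq {F : Type*} [AddCommMonoid F] {n : ℕ} (c : ℕ) (f : Fin n → F) :
    (∑ k : Fin n, if (k : ℕ) = c then f k else 0) = if h : c < n then f ⟨c, h⟩ else 0 := by
  split
  · next h => rw [Finset.sum_eq_single ⟨c, h⟩] <;> simp +contextual [Fin.ext_iff]
  · next h =>
    apply Finset.sum_eq_zero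
    intro k _
    have := k.isLt
    rw [if_neg]; omega

lemma st17_Zm_mul {F : Type*} [NonAssocSemiring F] {n p : ℕ} (M : Matrix (Fin n) (Fin p) F) :
    Zm F n * M = Matrix.of fun i j => M i.rev j := by
  ext i j
  rw [Matrix.mul_apply]
  have hi := i.isLt
  calc (∑ k, Zm F n i k * M k j)
      = ∑ k : Fin n, if (k : ℕ) = n - 1 - i then M k j else 0 := by
        refine Finset.sum_congr rfl fun k _ => ?_
        have := k.isLt
        simp only [Zm, Matrix.of_apply]
        split_ifs <;> simp_all <;> omega
    _ = _ := by
        rw [st17_sum_if_eq, dif_pos (by omega)]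
        simp only [Matrix.of_apply]
        congr 1
        exact Fin.ext (by simp [Fin.val_rev]; omega)

lemma st17_mul_Zm {F : Type*} [NonAssocSemiring F] {p n : ℕ} (M : Matrix (Fin p) (Fin n) F) :
    M * Zm F n = Matrix.of fun i j => M i j.rev := by
  ext i j
  rw [Matrix.mul_apply]
  have hj := j.isLt
  calc (∑ k, M i k * Zm F n k j)
      = ∑ k : Fin n, if (k : ℕ) = n - 1 - j then M i k else 0 := by
        refine Finset.sum_congr rfl fun k _ => ?_
        have := k.isLt
        simp only [Zm, Matrix.of_apply]
        split_ifs <;> simp_all <;> omega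
    _ = _ := by
        rw [st17_sum_if_eq, dif_pos (by omega)]
        simp only [Matrix.of_apply]
        congr 1
        exact Fin.ext (by simp [Fin.val_rev]; omega)

lemma st17_Zm_mul_Zm {F : Type*} [NonAssocSemiring F] (n : ℕ) : Zm F n * Zm F n = 1 := by
  rw [st17_Zm_mul]
  ext i j
  have := i.isLt; have := j.isLt
  simp only [Matrix.of_apply, Zm, Matrix.one_apply, Fin.val_rev, Fin.ext_iff]
  split_ifs <;> first | rfl | omega

lemma st17_isUnit_Zm {F : Type*} [CommRing F] (n : ℕ) : IsUnit (Zm F n) :=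
  (Matrix.isUnit_iff_isUnit_det _).mpr (Matrix.isUnit_det_of_right_inverse (st17_Zm_mul_Zm n))

lemma st17_isUnit_diagonal {F : Type*} [Field F] {n : ℕ} (d : Fin n → F)
    (h : ∀ i, d i ≠ 0) : IsUnit (Matrix.diagonal d) := by
  apply (Matrix.isUnit_iff_isUnit_det _).mpr (Matrix.isUnit_det_of_right_inverse (B := Matrix.diagonal fun i => (d i)⁻¹) ?_)
  rw [Matrix.diagonal_mul_diagonal,
    show (fun i => d i * (d i)⁻¹) = fun _ => (1 : F) from funext fun i => mul_inv_cancel₀ (h i),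
    Matrix.diagonal_one]

lemma st17_ZmS_eq {F : Type*} [Ring F] (s : ℕ) (δ : F) :
    ZmS s δ = Matrix.diagonal (fun i : Fin s => if (i : ℕ) < s / 2 then δ else 1) * Zm F s := by
  ext i j
  rw [Matrix.diagonal_mul]
  simp only [ZmS, Zm, Matrix.of_apply]
  split_ifs <;> simp

set_option maxHeartbeats 800000 in
theorem st17_hb {F : Type*} [Ring F] (r : ℕ) :
    Zm F r * (Gm F r)ᵀ * Zm F (r - 1) = (Fm F r)ᵀ := by
  rw [st17_Zm_mul, st17_mul_Zm]
  ext i j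
  have := i.isLt; have := j.isLt
  simp only [Matrix.of_apply, Matrix.transpose_apply, Gm, Fm, Fin.val_rev]
  split_ifs <;> first | rfl | omega

end Stmt17Aux

/-- Over a field of characteristic not 2, the quadruple `(F_r, G_rᵀ, I_r, I_{r-1})` is
isomorphic to the self-dual quadruple `(F_r, F_rᵀ, Z_r, Z_{r-1,δ})`; moreover
`Z_r G_rᵀ Z_{r-1} = F_rᵀ`, and for `δ = 1` an isomorphism is given by
`(Φ₁, Φ₂, Ψ₁, Ψ₂) = (I_r, Z_r, I_{r-1}, Z_{r-1})`. -/
theorem stmt17 {F : Type*} [Field F] (h2 : (2 : F) ≠ 0) (r : ℕ) (hr : 1 ≤ r)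
    (δ : F) (hδ : δ = 1 ∨ δ = -1) (hodd : δ = -1 → Odd r) :
    MQuad.Iso (⟨r, r, r - 1, r - 1, Fm F r, (Gm F r)ᵀ, 1, 1⟩ : MQuad F)
        ⟨r, r, r - 1, r - 1, Fm F r, (Fm F r)ᵀ, Zm F r, ZmS (r - 1) δ⟩ ∧
      Zm F r * (Gm F r)ᵀ * Zm F (r - 1) = (Fm F r)ᵀ ∧
      (δ = 1 →
        IsUnit (Zm F r) ∧ IsUnit (Zm F (r - 1)) ∧
        (Fm F r)ᵀ * Zm F (r - 1) = Zm F r * (Gm F r)ᵀ ∧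
        ZmS (r - 1) δ = Zm F (r - 1)) := by
  have hδ0 : δ ≠ 0 := by
    rcases hδ with h | h <;> subst h
    · exact one_ne_zero
    · simp only [ne_eq, neg_eq_zero, one_ne_zero, not_false_eq_true]
  set m : ℕ := (r - 1) / 2 with hm
  set ε : ℕ → F := fun k => δ ^ (k - m) with hε
  have hεne : ∀ k, ε k ≠ 0 := fun k => pow_ne_zero _ hδ0
  have key : ∀ i j : ℕ, i < r → j + 1 < r → i + j = r - 2 →
      (if i < m then δ else 1) * ε j = ε (j + 1) := by
    intro i j hi hj hij
    rcases hδ with h | h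
    · subst h; simp [hε]
    · obtain ⟨t, ht⟩ := hodd h
      subst h
      have hmt : m = t := by omega
      by_cases hjt : j < t
      · rw [if_neg (by omega)]
        simp only [hε, hmt]
        rw [show j - t = 0 by omega, show j + 1 - t = 0 by omega]
        norm_num
      · rw [if_pos (by omega)]
        simp only [hε, hmt]
        rw [show j + 1 - t = (j - t) + 1 by omega, pow_succ]
        ring
  have hb : Zm F r * (Gm F r)ᵀ * Zm F (r - 1) = (Fm F r)ᵀ := st17_hb r
  refine ⟨?_, hb, ?_⟩
  · refine ⟨rfl, rfl, rfl, rfl,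
      Matrix.diagonal fun i : Fin r => ε i,
      Zm F r * Matrix.diagonal fun i : Fin r => ε i,
      Matrix.diagonal fun i : Fin (r - 1) => ε i,
      ZmS (r - 1) δ * Matrix.diagonal fun i : Fin (r - 1) => ε i,
      st17_isUnit_diagonal _ (fun i => hεne i),
      (st17_isUnit_Zm r).mul (st17_isUnit_diagonal _ (fun i => hεne i)),
      st17_isUnit_diagonal _ (fun i => hεne i),
      ?_, ?_, ?_, (Matrix.mul_one _).symm, (Matrix.mul_one _).symm⟩
    · refine IsUnit.mul ?_ (st17_isUnit_diagonal _ (fun i => hεne i))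
      rw [st17_ZmS_eq]
      refine IsUnit.mul (st17_isUnit_diagonal _ ?_) (st17_isUnit_Zm _)
      intro i
      split
      · exact hδ0
      · exact one_ne_zero
    · -- Fm * Φ₁ = Ψ₁ * Fm
      show Fm F r * _ = _ * Fm F r
      ext i j
      rw [Matrix.mul_diagonal, Matrix.diagonal_mul]
      simp only [Fm, Matrix.of_apply]
      by_cases h : (i : ℕ) = (j : ℕ)
      · rw [if_pos h, h, one_mul, mul_one]
      · rw [if_neg h, zero_mul, mul_zero]
    · -- Fᵀ * Ψ₂ = Φ₂ * Gᵀ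
      show (Fm F r)ᵀ * (ZmS (r - 1) δ * _) = Zm F r * _ * (Gm F r)ᵀ
      rw [← Matrix.mul_assoc, Matrix.mul_assoc (Zm F r), st17_Zm_mul]
      ext i j
      have hi := i.isLt
      have hj := j.isLt
      rw [Matrix.mul_diagonal]
      have lhs1 : ((Fm F r)ᵀ * ZmS (r - 1) δ) i j
          = if h : (i : ℕ) < r - 1 then ZmS (r - 1) δ ⟨i, h⟩ j else 0 := by
        rw [Matrix.mul_apply, ← st17_sum_if_eq ((i : ℕ)) (fun k => ZmS (r - 1) δ k j)]
        refine Finset.sum_congr rfl fun k _ => ?_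
        simp only [Matrix.transpose_apply, Fm, Matrix.of_apply, ite_mul, one_mul, zero_mul]
      rw [lhs1]
      simp only [Matrix.diagonal_mul, Matrix.of_apply, Matrix.transpose_apply, Gm,
        ZmS, Fin.val_rev]
      by_cases h : (i : ℕ) < r - 1
      · rw [dif_pos h]
        by_cases hc : (i : ℕ) + (j : ℕ) = r - 1 - 1
        · rw [if_pos hc, if_pos (show (j : ℕ) + 1 = r - ((i : ℕ) + 1) by omega), mul_one,
            show r - ((i : ℕ) + 1) = (j : ℕ) + 1 by omega]
          exact key i j (by omega) (by omega) (by omega)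
        · rw [if_neg hc, if_neg (by omega), zero_mul, mul_zero]
      · rw [dif_neg h, if_neg (by omega), zero_mul, mul_zero]
  · rintro rfl
    refine ⟨st17_isUnit_Zm r, st17_isUnit_Zm (r - 1), ?_, ?_⟩
    · rw [← hb, Matrix.mul_assoc (Zm F r * (Gm F r)ᵀ), st17_Zm_mul_Zm, Matrix.mul_one]
    · ext i j
      simp only [ZmS, Zm, Matrix.of_apply, ite_self]
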